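/- Let P(q) = Σ_{k=0}^{n−1} a_k q^k be a polynomial of degree at most n−1 with integer coefficients. Then P is even modulo n (i.e., gcd(i,n) = gcd(j,n) implies a_i = a_j) if and only if for every divisor d of n the residue of P modulo the d-th cyclotomic polynomial Φ_d is a constant r_d ∈ ℤ. In that case, a_k = (1/n) Σ_{d|n} c(k,d)·r_d and r_d = Σ_{t|n} c(n/d, t)·a_{n/t}. -/

import Mathlib

noncomputable section

/-- The Ramanujan (Von Sterneck) sum `c(k,d)`: the sum of the `k`-th powers of the
primitive `d`-th roots of unity (in `ℂ`). -/
def ramanujanC (k d : ℕ) : ℂ := ∑ z ∈ primitiveRoots d ℂ, z ^ k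

/-- The polynomial `P(q) = ∑_{k=0}^{n-1} a_k q^k` with integer coefficients. -/
def evenPoly (n : ℕ) (a : ℕ → ℤ) : Polynomial ℤ :=
  ∑ k ∈ Finset.range n, Polynomial.C (a k) * Polynomial.X ^ k

/-- `P` is even modulo `n`: `gcd(i,n) = gcd(j,n)` implies `a_i = a_j`. -/
def IsEvenMod (n : ℕ) (a : ℕ → ℤ) : Prop :=
  ∀ i < n, ∀ j < n, Nat.gcd i n = Nat.gcd j n → a i = a j

namespace CohenAux

open Finset Polynomial

variable {n : ℕ}

lemma pow_mod {z : ℂ} (hz : z ^ n = 1) (m : ℕ) : z ^ m = z ^ (m % n) := by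
  conv_lhs => rw [← Nat.div_add_mod m n]
  rw [pow_add, pow_mul, hz, one_pow, one_mul]

lemma pow_congr {z : ℂ} (hz : z ^ n = 1) {m m' : ℕ}
    (h : (m : ZMod n) = (m' : ZMod n)) : z ^ m = z ^ m' := by
  rw [pow_mod hz m, pow_mod hz m']
  rw [ZMod.natCast_eq_natCast_iff] at h
  exact congrArg (z ^ ·) h

lemma sum_zmod [NeZero n] (f : ℕ → ℂ) :
    ∑ x : ZMod n, f x.val = ∑ m ∈ Finset.range n, f m := by
  refine Finset.sum_nbij' (fun x => x.val) (fun m => (m : ZMod n)) ?_ ?_ ?_ ?_ ?_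
  · intro x _; exact Finset.mem_range.mpr x.val_lt
  · intro m _; exact Finset.mem_univ _
  · intro x _; exact ZMod.natCast_rightInverse x
  · intro m hm; exact ZMod.val_natCast_of_lt (Finset.mem_range.mp hm)
  · intro x _; rfl

lemma gcd_mod (m : ℕ) : Nat.gcd (m % n) n = Nat.gcd m n := by
  rw [Nat.gcd_comm m n, Nat.gcd_rec n m]

lemma exists_unit (hn : 0 < n) (m : ℕ) :
    ∃ u : (ZMod n)ˣ, (m : ZMod n) = (u : ZMod n) * (Nat.gcd m n : ZMod n) := by
  have hne : NeZero n := ⟨hn.ne'⟩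
  have hg0 : 0 < Nat.gcd m n := Nat.gcd_pos_of_pos_right m hn
  have hgd : Nat.gcd m n ∣ n := Nat.gcd_dvd_right m n
  have hgm : Nat.gcd m n ∣ m := Nat.gcd_dvd_left m n
  have hq : (n / Nat.gcd m n) ∣ n := Nat.div_dvd_of_dvd hgd
  have hco : Nat.Coprime (m / Nat.gcd m n) (n / Nat.gcd m n) :=
    Nat.coprime_div_gcd_div_gcd hg0
  obtain ⟨u, hu⟩ := ZMod.unitsMap_surjective hq (ZMod.unitOfCoprime _ hco)
  refine ⟨u, ?_⟩
  have h2 := congrArg (fun t : (ZMod (n / Nat.gcd m n))ˣ =>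
    (t : ZMod (n / Nat.gcd m n))) hu
  simp only [ZMod.unitsMap_def, Units.coe_map, ZMod.castHom_apply,
    MonoidHom.coe_coe, ZMod.coe_unitOfCoprime] at h2
  have h1 : ((u : ZMod n).val : ZMod (n / Nat.gcd m n))
      = ((m / Nat.gcd m n : ℕ) : ZMod (n / Nat.gcd m n)) := by
    rw [ZMod.natCast_val]; exact h2
  have h3 : (u : ZMod n).val * Nat.gcd m n ≡ (m / Nat.gcd m n) * Nat.gcd m n
      [MOD (n / Nat.gcd m n) * Nat.gcd m n] :=
    ((ZMod.natCast_eq_natCast_iff _ _ _).mp h1).mul_right' _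
  rw [Nat.div_mul_cancel hgm, Nat.div_mul_cancel hgd] at h3
  have h4 := (ZMod.natCast_eq_natCast_iff _ _ _).mpr h3
  push_cast at h4
  rw [ZMod.natCast_val, ZMod.cast_id] at h4
  exact h4.symm

lemma gcd_unit_mul [NeZero n] (u : (ZMod n)ˣ) (x : ZMod n) :
    Nat.gcd (((u : ZMod n) * x)).val n = Nat.gcd x.val n := by
  have key : ∀ (v : (ZMod n)ˣ) (y : ZMod n),
      Nat.gcd y.val n ∣ Nat.gcd (((v : ZMod n) * y)).val n := by
    intro v y
    apply Nat.dvd_gcd _ (Nat.gcd_dvd_right _ _)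
    rw [ZMod.val_mul]
    exact (Nat.dvd_mod_iff (Nat.gcd_dvd_right y.val n)).mpr
      (Dvd.dvd.mul_left (Nat.gcd_dvd_left _ _) _)
  refine Nat.dvd_antisymm ?_ (key u x)
  have h := key u⁻¹ ((u : ZMod n) * x)
  rwa [Units.inv_mul_cancel_left] at h

lemma sum_units_perm [NeZero n] (u : (ZMod n)ˣ) (f : ZMod n → ℂ) :
    ∑ x : ZMod n, f ((u : ZMod n) * x) = ∑ x : ZMod n, f x := by
  refine Fintype.sum_bijective (fun x => (u : ZMod n) * x) ?_ _ _ (fun x => rfl)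
  exact Function.bijective_iff_has_inverse.mpr
    ⟨fun y => (u⁻¹ : (ZMod n)ˣ) * y,
     fun x => Units.inv_mul_cancel_left u x,
     fun y => Units.mul_inv_cancel_left u y⟩

lemma sum_invariant (hn : 0 < n) {z : ℂ} (hzn : z ^ n = 1) (b : ℕ → ℂ)
    (hb : ∀ x y : ZMod n, Nat.gcd x.val n = Nat.gcd y.val n → b x.val = b y.val)
    {i j : ℕ} (hij : Nat.gcd i n = Nat.gcd j n) :
    ∑ k ∈ Finset.range n, b k * z ^ (i * k)
      = ∑ k ∈ Finset.range n, b k * z ^ (j * k) := by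
  have hne : NeZero n := ⟨hn.ne'⟩
  obtain ⟨u, hu⟩ := exists_unit hn i
  obtain ⟨v, hv⟩ := exists_unit hn j
  set w : (ZMod n)ˣ := v * u⁻¹ with hw
  have hji : (j : ZMod n) = (w : ZMod n) * (i : ZMod n) := by
    rw [hu, hv, hij, hw, Units.val_mul, mul_assoc, Units.inv_mul_cancel_left]
  calc ∑ k ∈ Finset.range n, b k * z ^ (i * k)
      = ∑ x : ZMod n, b x.val * z ^ (i * x.val) :=
        (sum_zmod (fun k => b k * z ^ (i * k))).symm
    _ = ∑ x : ZMod n, b ((((w⁻¹ : (ZMod n)ˣ) : ZMod n)) * x).val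
          * z ^ (j * ((((w⁻¹ : (ZMod n)ˣ) : ZMod n)) * x).val) := by
        refine Finset.sum_congr rfl fun x _ => ?_
        have hgcd := gcd_unit_mul (n := n) w⁻¹ x
        congr 1
        · exact hb _ _ hgcd.symm
        · refine pow_congr hzn ?_
          push_cast
          rw [ZMod.natCast_val, ZMod.cast_id, ZMod.natCast_val, ZMod.cast_id, hji,
            mul_comm ((w : ZMod n)) ((i : ZMod n)), mul_assoc,
            Units.mul_inv_cancel_left]
    _ = ∑ x : ZMod n, b x.val * z ^ (j * x.val) :=
        sum_units_perm w⁻¹ (fun x => b x.val * z ^ (j * x.val))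
    _ = ∑ k ∈ Finset.range n, b k * z ^ (j * k) :=
        sum_zmod (fun k => b k * z ^ (j * k))


lemma isPrimitiveRoot_pow_gcd (hn : 0 < n) {z : ℂ} (hz : IsPrimitiveRoot z n)
    {d m : ℕ} (hd : d ∣ n) (hg : Nat.gcd m n = n / d) :
    IsPrimitiveRoot (z ^ m) d := by
  have hg0 : 0 < Nat.gcd m n := Nat.gcd_pos_of_pos_right m hn
  have hgm : Nat.gcd m n ∣ m := Nat.gcd_dvd_left m n
  have hnd : n / Nat.gcd m n = d := by rw [hg, Nat.div_div_self hd hn.ne']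
  have hco : Nat.Coprime (m / Nat.gcd m n) d := hnd ▸ Nat.coprime_div_gcd_div_gcd hg0
  have h1 : IsPrimitiveRoot (z ^ Nat.gcd m n) d :=
    hz.pow hn (by rw [hg, Nat.div_mul_cancel hd])
  have h2 := h1.pow_of_coprime _ hco
  rwa [← pow_mul, Nat.mul_div_cancel' hgm] at h2

lemma gcd_of_isPrimitiveRoot_pow (hn : 0 < n) {z : ℂ} (hz : IsPrimitiveRoot z n)
    {d : ℕ} (hd : d ∣ n) (m : ℕ) (hw : IsPrimitiveRoot (z ^ m) d) :
    Nat.gcd m n = n / d := by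
  have h1 : IsPrimitiveRoot (z ^ m) (n / Nat.gcd m n) :=
    isPrimitiveRoot_pow_gcd hn hz (Nat.div_dvd_of_dvd (Nat.gcd_dvd_right m n))
      (by rw [Nat.div_div_self (Nat.gcd_dvd_right m n) hn.ne'])
  have h2 : d = n / Nat.gcd m n := hw.unique h1
  rw [h2, Nat.div_div_self (Nat.gcd_dvd_right m n) hn.ne']

lemma fiber_sum (hn : 0 < n) {z : ℂ} (hz : IsPrimitiveRoot z n) {d : ℕ}
    (hd : d ∣ n) (e : ℕ) :
    ∑ m ∈ (Finset.range n).filter (fun m => Nat.gcd m n = n / d), (z ^ m) ^ e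
      = ramanujanC e d := by
  have hne : NeZero n := ⟨hn.ne'⟩
  have hd0 : 0 < d := Nat.pos_of_dvd_of_pos hd hn
  refine Finset.sum_bij (fun m _ => z ^ m) ?_ ?_ ?_ ?_
  · intro m hm
    simp only [Finset.mem_filter, Finset.mem_range] at hm
    exact (mem_primitiveRoots hd0).mpr (isPrimitiveRoot_pow_gcd hn hz hd hm.2)
  · intro m1 h1 m2 h2 he
    simp only [Finset.mem_filter, Finset.mem_range] at h1 h2
    exact hz.pow_inj h1.1 h2.1 he
  · intro w hw
    have hw' := (mem_primitiveRoots hd0).mp hw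
    have hwn : w ^ n = 1 := by
      rw [← Nat.mul_div_cancel' hd, pow_mul, hw'.pow_eq_one, one_pow]
    obtain ⟨m, hmn, hzm⟩ := hz.eq_pow_of_pow_eq_one hwn
    exact ⟨m, Finset.mem_filter.mpr ⟨Finset.mem_range.mpr hmn,
      gcd_of_isPrimitiveRoot_pow hn hz hd m (hzm ▸ hw')⟩, hzm⟩
  · intro m hm; rfl

lemma eval_evenPoly (a : ℕ → ℤ) (z : ℂ) :
    ((evenPoly n a).map (Int.castRingHom ℂ)).eval z
      = ∑ k ∈ Finset.range n, (a k : ℂ) * z ^ k := by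
  simp [evenPoly, Polynomial.map_sum, Polynomial.eval_finset_sum]

lemma eval_eq_of_modByMonic (a : ℕ → ℤ) {d : ℕ} (hd0 : 0 < d) {r : ℤ}
    (h : evenPoly n a %ₘ cyclotomic d ℤ = C r) {z : ℂ} (hz : IsPrimitiveRoot z d) :
    ∑ k ∈ Finset.range n, (a k : ℂ) * z ^ k = (r : ℂ) := by
  have hm : (cyclotomic d ℤ).Monic := cyclotomic.monic d ℤ
  have key := modByMonic_add_div (evenPoly n a) (cyclotomic d ℤ)
  rw [h] at key
  have hc0 : Polynomial.eval z (cyclotomic d ℂ) = 0 :=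
    (isRoot_cyclotomic_iff_charZero hd0).mpr hz
  rw [← eval_evenPoly a z, ← key]
  simp [Polynomial.map_add, Polynomial.map_mul, map_cyclotomic, hc0]

lemma modByMonic_eq_C (a : ℕ → ℤ) {d : ℕ} (hd0 : 0 < d) (v : ℂ)
    (h : ∀ w ∈ primitiveRoots d ℂ, (∑ k ∈ Finset.range n, (a k : ℂ) * w ^ k) = v) :
    ∃ r : ℤ, evenPoly n a %ₘ cyclotomic d ℤ = C r := by
  classical
  set R := evenPoly n a %ₘ cyclotomic d ℤ with hR
  have hm : (cyclotomic d ℤ).Monic := cyclotomic.monic d ℤ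
  have hmap0 : R.map (Int.castRingHom ℂ) - C v = 0 := by
    apply Polynomial.eq_zero_of_natDegree_lt_card_of_eval_eq_zero' _ (primitiveRoots d ℂ)
    · intro w hw
      have hw' := (mem_primitiveRoots hd0).mp hw
      have key := modByMonic_add_div (evenPoly n a) (cyclotomic d ℤ)
      have hc0 : Polynomial.eval w (cyclotomic d ℂ) = 0 :=
        (isRoot_cyclotomic_iff_charZero hd0).mpr hw'
      have hPw : ((evenPoly n a).map (Int.castRingHom ℂ)).eval w
          = (R.map (Int.castRingHom ℂ)).eval w := by
        conv_lhs => rw [← key]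
        simp [Polynomial.map_add, Polynomial.map_mul, map_cyclotomic, hc0, hR]
      have hPv : ((evenPoly n a).map (Int.castRingHom ℂ)).eval w = v := by
        rw [eval_evenPoly]; exact h w hw
      rw [eval_sub, eval_C, ← hPw, hPv, sub_self]
    · have h2 : R.natDegree < d.totient := by
        rcases eq_or_ne R 0 with h0 | h0
        · simp [h0, Nat.totient_pos.mpr hd0]
        · have h3 := degree_modByMonic_lt (evenPoly n a) hm
          rw [degree_cyclotomic] at h3
          exact (natDegree_lt_iff_degree_lt h0).mpr h3
      rw [Complex.card_primitiveRoots]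
      calc (R.map (Int.castRingHom ℂ) - C v).natDegree
          ≤ max (R.map (Int.castRingHom ℂ)).natDegree (C v).natDegree :=
            natDegree_sub_le _ _
        _ ≤ max R.natDegree 0 := by
            gcongr
            · exact natDegree_map_le
            · exact le_of_eq (natDegree_C v)
        _ = R.natDegree := by simp
        _ < d.totient := h2
  have hcoeff : ∀ k, k ≠ 0 → R.coeff k = 0 := by
    intro k hk
    have h5 := congrArg (fun p => Polynomial.coeff p k) hmap0
    simp [Polynomial.coeff_map, Polynomial.coeff_C, hk] at h5
    exact_mod_cast h5
  refine ⟨R.coeff 0, Polynomial.ext fun k => ?_⟩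
  rcases eq_or_ne k 0 with rfl | hk
  · simp
  · rw [hcoeff k hk, Polynomial.coeff_C, if_neg hk]


lemma inversion (hn : 0 < n) {z : ℂ} (hz : IsPrimitiveRoot z n) (a : ℕ → ℤ)
    {i : ℕ} (hi : i < n) :
    ∑ m ∈ Finset.range n,
        (∑ k ∈ Finset.range n, (a k : ℂ) * (z ^ m) ^ k) * ((z⁻¹) ^ m) ^ i
      = (n : ℂ) * (a i : ℂ) := by
  have hzn : z ^ n = 1 := hz.pow_eq_one
  have hz0 : z ≠ 0 := hz.ne_zero hn.ne'
  calc ∑ m ∈ Finset.range n,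
        (∑ k ∈ Finset.range n, (a k : ℂ) * (z ^ m) ^ k) * ((z⁻¹) ^ m) ^ i
      = ∑ m ∈ Finset.range n, ∑ k ∈ Finset.range n,
          (a k : ℂ) * ((z ^ k * (z⁻¹) ^ i) ^ m) := by
        refine Finset.sum_congr rfl fun m _ => ?_
        rw [Finset.sum_mul]
        refine Finset.sum_congr rfl fun k _ => ?_
        rw [mul_assoc, pow_right_comm z m k, pow_right_comm z⁻¹ m i, ← mul_pow]
    _ = ∑ k ∈ Finset.range n, (a k : ℂ)
          * ∑ m ∈ Finset.range n, (z ^ k * (z⁻¹) ^ i) ^ m := by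
        rw [Finset.sum_comm]
        exact Finset.sum_congr rfl fun k _ => (Finset.mul_sum _ _ _).symm
    _ = (n : ℂ) * (a i : ℂ) := by
        rw [Finset.sum_eq_single i]
        · rw [inv_pow, mul_inv_cancel₀ (pow_ne_zero _ hz0)]
          simp [mul_comm]
        · intro k hk hki
          have hw1 : z ^ k * (z⁻¹) ^ i ≠ 1 := by
            rw [inv_pow]
            intro hcon
            apply hki
            refine hz.pow_inj (Finset.mem_range.mp hk) hi ?_
            field_simp at hcon
            exact hcon
          have hwn : (z ^ k * (z⁻¹) ^ i) ^ n = 1 := by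
            rw [mul_pow, pow_right_comm z k n, pow_right_comm z⁻¹ i n, hzn,
              inv_pow, hzn, inv_one, one_pow, one_pow, one_mul]
          rw [geom_sum_eq hw1, hwn, sub_self, zero_div, mul_zero]
        · intro hni
          exact absurd (Finset.mem_range.mpr hi) hni

lemma value_eq (hn : 0 < n) {z : ℂ} (hz : IsPrimitiveRoot z n) (a : ℕ → ℤ)
    (r : ℕ → ℤ)
    (hr : ∀ d ∈ n.divisors, evenPoly n a %ₘ cyclotomic d ℤ = C (r d)) (m : ℕ) :
    ∑ k ∈ Finset.range n, (a k : ℂ) * (z ^ m) ^ k = (r (n / Nat.gcd m n) : ℂ) := by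
  have hg0 : 0 < Nat.gcd m n := Nat.gcd_pos_of_pos_right m hn
  have hd : n / Nat.gcd m n ∣ n := Nat.div_dvd_of_dvd (Nat.gcd_dvd_right m n)
  have hd0 : 0 < n / Nat.gcd m n :=
    Nat.div_pos (Nat.le_of_dvd hn (Nat.gcd_dvd_right m n)) hg0
  have hprim : IsPrimitiveRoot (z ^ m) (n / Nat.gcd m n) :=
    isPrimitiveRoot_pow_gcd hn hz hd
      (by rw [Nat.div_div_self (Nat.gcd_dvd_right m n) hn.ne'])
  exact eval_eq_of_modByMonic a hd0
    (hr _ (Nat.mem_divisors.mpr ⟨hd, hn.ne'⟩)) hprim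

lemma even_of_residues (hn : 0 < n) {z : ℂ} (hz : IsPrimitiveRoot z n)
    (a : ℕ → ℤ) (r : ℕ → ℤ)
    (hr : ∀ d ∈ n.divisors, evenPoly n a %ₘ cyclotomic d ℤ = C (r d)) :
    IsEvenMod n a := by
  have hn0 : (n : ℂ) ≠ 0 := Nat.cast_ne_zero.mpr hn.ne'
  have hinvzn : (z⁻¹) ^ n = 1 := by rw [inv_pow, hz.pow_eq_one, inv_one]
  have key : ∀ i, i < n →
      (n : ℂ) * (a i : ℂ) = ∑ m ∈ Finset.range n,
        (r (n / Nat.gcd m n) : ℂ) * (z⁻¹) ^ (i * m) := by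
    intro i hi
    rw [← inversion hn hz a hi]
    refine Finset.sum_congr rfl fun m _ => ?_
    rw [value_eq hn hz a r hr m, ← pow_mul, mul_comm m i]
  intro i hi j hj hij
  have h1 := key i hi
  have h2 := key j hj
  rw [sum_invariant hn hinvzn (fun m => (r (n / Nat.gcd m n) : ℂ))
    (fun x y hxy => by rw [hxy]) hij] at h1
  have h3 : (n : ℂ) * (a i : ℂ) = (n : ℂ) * (a j : ℂ) := h1.trans h2.symm
  have h4 := mul_left_cancel₀ hn0 h3
  exact_mod_cast h4

lemma residues_of_even (hn : 0 < n) {z : ℂ} (hz : IsPrimitiveRoot z n)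
    (a : ℕ → ℤ) (hE : IsEvenMod n a) :
    ∀ d ∈ n.divisors, ∃ r : ℤ, evenPoly n a %ₘ cyclotomic d ℤ = C r := by
  intro d hdm
  have hd : d ∣ n := (Nat.mem_divisors.mp hdm).1
  have hd0 : 0 < d := Nat.pos_of_mem_divisors hdm
  have hne : NeZero n := ⟨hn.ne'⟩
  apply modByMonic_eq_C a hd0
    (∑ k ∈ Finset.range n, (a k : ℂ) * (z ^ (n / d)) ^ k)
  intro w hw
  have hw' := (mem_primitiveRoots hd0).mp hw
  have hwn : w ^ n = 1 := by
    rw [← Nat.mul_div_cancel' hd, pow_mul, hw'.pow_eq_one, one_pow]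
  obtain ⟨m, hmn, rfl⟩ := hz.eq_pow_of_pow_eq_one hwn
  have hgm : Nat.gcd m n = n / d := gcd_of_isPrimitiveRoot_pow hn hz hd m hw'
  have hgnd : Nat.gcd (n / d) n = n / d := Nat.gcd_eq_left (Nat.div_dvd_of_dvd hd)
  have hb : ∀ x y : ZMod n, Nat.gcd x.val n = Nat.gcd y.val n →
      ((a x.val : ℂ)) = (a y.val : ℂ) := by
    intro x y hxy
    exact_mod_cast congrArg (fun t : ℤ => (t : ℂ))
      (hE x.val x.val_lt y.val y.val_lt hxy)
  have h := sum_invariant hn hz.pow_eq_one (fun k => (a k : ℂ)) hb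
    (hgm.trans hgnd.symm)
  simpa only [pow_mul] using h


lemma divisors_filter_eq {d : ℕ} (hn : 0 < n) (hdn : d ∣ n) :
    (Finset.range n).filter (fun m => n / Nat.gcd m n = d)
      = (Finset.range n).filter (fun m => Nat.gcd m n = n / d) := by
  apply Finset.filter_congr
  intro m _
  constructor
  · intro h; rw [← h, Nat.div_div_self (Nat.gcd_dvd_right m n) hn.ne']
  · intro h; rw [h, Nat.div_div_self hdn hn.ne']

lemma part2 (hn : 0 < n) {z : ℂ} (hz : IsPrimitiveRoot z n) (a : ℕ → ℤ)
    (r : ℕ → ℤ)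
    (hr : ∀ d ∈ n.divisors, evenPoly n a %ₘ cyclotomic d ℤ = C (r d))
    {k : ℕ} (hk : k < n) :
    (a k : ℂ) = (1 / (n : ℂ)) * ∑ d ∈ n.divisors, ramanujanC k d * (r d : ℂ) := by
  have hn0 : (n : ℂ) ≠ 0 := Nat.cast_ne_zero.mpr hn.ne'
  have hinv := inversion hn hz a hk
  have h1 : ∑ m ∈ Finset.range n,
      (∑ k' ∈ Finset.range n, (a k' : ℂ) * (z ^ m) ^ k') * ((z⁻¹) ^ m) ^ k
      = ∑ m ∈ Finset.range n, (r (n / Nat.gcd m n) : ℂ) * ((z⁻¹) ^ m) ^ k :=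
    Finset.sum_congr rfl fun m _ => by rw [value_eq hn hz a r hr m]
  rw [h1] at hinv
  have hmaps : ∀ m ∈ Finset.range n, n / Nat.gcd m n ∈ n.divisors := fun m _ =>
    Nat.mem_divisors.mpr ⟨Nat.div_dvd_of_dvd (Nat.gcd_dvd_right m n), hn.ne'⟩
  rw [← Finset.sum_fiberwise_of_maps_to hmaps
    (fun m => (r (n / Nat.gcd m n) : ℂ) * ((z⁻¹) ^ m) ^ k)] at hinv
  have h2 : ∀ d ∈ n.divisors,
      ∑ m ∈ (Finset.range n).filter (fun m => n / Nat.gcd m n = d),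
        (r (n / Nat.gcd m n) : ℂ) * ((z⁻¹) ^ m) ^ k
      = ramanujanC k d * (r d : ℂ) := by
    intro d hd
    have hdn : d ∣ n := (Nat.mem_divisors.mp hd).1
    rw [divisors_filter_eq hn hdn]
    have h3 : ∀ m ∈ (Finset.range n).filter (fun m => Nat.gcd m n = n / d),
        (r (n / Nat.gcd m n) : ℂ) * ((z⁻¹) ^ m) ^ k
        = (r d : ℂ) * ((z⁻¹) ^ m) ^ k := by
      intro m hm
      obtain ⟨_, hm2⟩ := Finset.mem_filter.mp hm
      rw [hm2, Nat.div_div_self hdn hn.ne']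
    rw [Finset.sum_congr rfl h3, ← Finset.mul_sum, fiber_sum hn hz.inv hdn k,
      mul_comm]
  rw [Finset.sum_congr rfl h2] at hinv
  rw [hinv, one_div, inv_mul_cancel_left₀ hn0]

lemma part3 (hn : 0 < n) {z : ℂ} (hz : IsPrimitiveRoot z n) (a : ℕ → ℤ)
    (r : ℕ → ℤ)
    (hr : ∀ d ∈ n.divisors, evenPoly n a %ₘ cyclotomic d ℤ = C (r d))
    {d : ℕ} (hdm : d ∈ n.divisors) :
    (r d : ℂ) = ∑ u ∈ n.divisors, ramanujanC (n / d) u * (a (n / u % n) : ℂ) := by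
  have hE := even_of_residues hn hz a r hr
  have hd : d ∣ n := (Nat.mem_divisors.mp hdm).1
  have hd0 : 0 < d := Nat.pos_of_mem_divisors hdm
  have hzd : IsPrimitiveRoot (z ^ (n / d)) d :=
    hz.pow hn (Nat.div_mul_cancel hd).symm
  have h1 : ∑ k ∈ Finset.range n, (a k : ℂ) * (z ^ (n / d)) ^ k = (r d : ℂ) :=
    eval_eq_of_modByMonic a hd0 (hr d hdm) hzd
  rw [← h1]
  have hmaps : ∀ m ∈ Finset.range n, n / Nat.gcd m n ∈ n.divisors := fun m _ =>
    Nat.mem_divisors.mpr ⟨Nat.div_dvd_of_dvd (Nat.gcd_dvd_right m n), hn.ne'⟩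
  rw [← Finset.sum_fiberwise_of_maps_to hmaps
    (fun k => (a k : ℂ) * (z ^ (n / d)) ^ k)]
  refine Finset.sum_congr rfl fun u hu => ?_
  have hun : u ∣ n := (Nat.mem_divisors.mp hu).1
  rw [divisors_filter_eq hn hun]
  have hrep : ∀ m ∈ (Finset.range n).filter (fun m => Nat.gcd m n = n / u),
      (a m : ℂ) * (z ^ (n / d)) ^ m
      = (a (n / u % n) : ℂ) * (z ^ m) ^ (n / d) := by
    intro m hm
    obtain ⟨hm1, hm2⟩ := Finset.mem_filter.mp hm
    have hgr : Nat.gcd (n / u % n) n = n / u := by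
      rw [gcd_mod, Nat.gcd_eq_left (Nat.div_dvd_of_dvd hun)]
    have h4 := hE m (Finset.mem_range.mp hm1) (n / u % n) (Nat.mod_lt _ hn)
      (hm2.trans hgr.symm)
    rw [h4, pow_right_comm]
  rw [Finset.sum_congr rfl hrep, ← Finset.mul_sum, fiber_sum hn hz hun (n / d),
    mul_comm]


end CohenAux

/-- **E. Cohen's generalization of Möbius inversion** (Lemma 7.4 of the paper).
Let `P(q) = ∑_{k<n} a_k q^k` have integer coefficients.  Then `P` is even modulo `n`
iff for every divisor `d` of `n` the residue of `P` modulo the cyclotomic polynomial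
`Φ_d` is a constant `r_d ∈ ℤ`; in that case
`a_k = (1/n) ∑_{d ∣ n} c(k,d) r_d` and `r_d = ∑_{t ∣ n} c(n/d, t) a_{n/t (mod n)}`,
where `c(·,·)` is the Ramanujan sum. -/
theorem cohen_moebius_inversion (n : ℕ) (hn : 0 < n) (a : ℕ → ℤ) :
    (IsEvenMod n a ↔
      ∀ d ∈ n.divisors, ∃ r : ℤ,
        evenPoly n a %ₘ Polynomial.cyclotomic d ℤ = Polynomial.C r) ∧
    ∀ r : ℕ → ℤ,
      (∀ d ∈ n.divisors,
          evenPoly n a %ₘ Polynomial.cyclotomic d ℤ = Polynomial.C (r d)) →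
      (∀ k < n,
          (a k : ℂ) = (1 / (n : ℂ)) * ∑ d ∈ n.divisors, ramanujanC k d * (r d : ℂ)) ∧
      (∀ d ∈ n.divisors,
          (r d : ℂ) = ∑ u ∈ n.divisors, ramanujanC (n / d) u * (a (n / u % n) : ℂ)) := by
  obtain ⟨z, hz⟩ : ∃ z : ℂ, IsPrimitiveRoot z n :=
    ⟨_, Complex.isPrimitiveRoot_exp n hn.ne'⟩
  constructor
  · constructor
    · exact fun hE => CohenAux.residues_of_even hn hz a hE
    · intro hR
      have hex : ∃ r : ℕ → ℤ, ∀ d ∈ n.divisors,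
          evenPoly n a %ₘ Polynomial.cyclotomic d ℤ = Polynomial.C (r d) := by
        choose r hr using hR
        exact ⟨fun d => if h : d ∈ n.divisors then r d h else 0,
          fun d hd => by simp only [dif_pos hd]; exact hr d hd⟩
      obtain ⟨r, hr⟩ := hex
      exact CohenAux.even_of_residues hn hz a r hr
  · intro r hr
    exact ⟨fun k hk => CohenAux.part2 hn hz a r hr hk,
           fun d hd => CohenAux.part3 hn hz a r hr hd⟩
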